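/- Let Φ be a valued constraint language over a finite domain D containing every unary cost function D → ℝ̄≥0. Suppose for some k ≥ 1 there are a₀,…,a_{2k}, b₀,…,b_{2k} ∈ D with aᵢ ≠ bᵢ for each 0 ≤ i ≤ 2k, and binary cost functions g₀,…,g_{2k} ∈ ⟨Φ⟩_v such that the set of points of finite value of gᵢ is N(aᵢ,bᵢ,a_{i+1},b_{i+1}) for each 0 ≤ i ≤ 2k−1, and the set of points of finite value of g_{2k} is N(a_{2k},b_{2k},a₀,b₀). Then Φ is not weakly submodular. -/

import Mathlib

open scoped NNRat ENNReal

/-- A cost function of some arity over domain `D`, taking values in `ℝ≥0 ∪ {∞}`. -/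
abbrev CFun (D : Type) : Type := Σ k : ℕ, (Fin k → D) → ℝ≥0∞

/-- The binary crisp equality cost function. -/
noncomputable def eqC (D : Type) [DecidableEq D] : (Fin 2 → D) → ℝ≥0∞ :=
  fun x => if x 0 = x 1 then 0 else ⊤

/-- `f` is definable by a psm-formula over `Φ ∪ {eq}`: a minimisation over `k`
bound variables of a sum of `m` atomic formulas. -/
def InVClone {D : Type} [Fintype D] [DecidableEq D] (Φ : Set (CFun D)) {n : ℕ}
    (f : (Fin n → D) → ℝ≥0∞) : Prop :=
  ∃ (k m : ℕ) (ar : Fin m → ℕ) (g : ∀ j : Fin m, (Fin (ar j) → D) → ℝ≥0∞)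
    (sc : ∀ j : Fin m, Fin (ar j) → Fin (n + k)),
    (∀ j : Fin m, (⟨ar j, g j⟩ : CFun D) ∈ Φ ∨ (⟨ar j, g j⟩ : CFun D) = ⟨2, eqC D⟩) ∧
    ∀ x : Fin n → D, f x = ⨅ y : Fin k → D, ∑ j : Fin m, g j (fun i => Fin.append x y (sc j i))

/-- Weak submodularity of a valued constraint language. -/
def WeaklySubmodular {D : Type} [Fintype D] [DecidableEq D] (Φ : Set (CFun D)) : Prop :=
  ∀ f : (Fin 2 → D) → ℝ≥0∞, InVClone Φ f → ∀ a b : D,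
    f ![a, a] + f ![b, b] ≤ f ![a, b] + f ![b, a] ∨ (f ![a, a] = ⊤ ∧ f ![b, b] = ⊤)

section Part1
variable {D : Type} [Fintype D] [DecidableEq D]

lemma append_eq_elim {n k : ℕ} (x : Fin n → D) (y : Fin k → D) (s : Fin n ⊕ Fin k) :
    Fin.append x y (finSumFinEquiv s) = Sum.elim x y s := by
  cases s with
  | inl r => rw [finSumFinEquiv_apply_left, Fin.append_left]; rfl
  | inr r => rw [finSumFinEquiv_apply_right, Fin.append_right]; rfl

/-- infimum over functions on a sum type splits -/
lemma iInf_sum_arrow {V S : Type} (h : (V ⊕ S → D) → ℝ≥0∞) :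
    ⨅ v' : V ⊕ S → D, h v' = ⨅ v : V → D, ⨅ w : S → D, h (Sum.elim v w) := by
  apply le_antisymm
  · exact le_iInf₂ fun v w => iInf_le _ (Sum.elim v w)
  · refine le_iInf fun v' => ?_
    refine (iInf₂_le (v' ∘ Sum.inl) (v' ∘ Sum.inr)).trans_eq ?_
    congr 1; funext z; cases z <;> rfl

/-- infimum over functions on a sigma type is infimum over dependent functions -/
lemma iInf_sigma_arrow {A : Type} {κ : A → Type} (h : ((Σ j : A, κ j) → D) → ℝ≥0∞) :
    ⨅ w : (Σ j : A, κ j) → D, h w = ⨅ W : ∀ j : A, κ j → D, h (fun p => W p.1 p.2) := by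
  apply le_antisymm
  · exact le_iInf fun W => iInf_le _ (fun (p : Σ j : A, κ j) => W p.1 p.2)
  · refine le_iInf fun w => (iInf_le _ (fun j r => w ⟨j, r⟩)).trans_eq rfl

/-- a finite sum of infima over independent coordinates -/
lemma iInf_sum_pi [Nonempty D] {A : Type} [Fintype A] {κ : A → ℕ}
    (h : ∀ j : A, (Fin (κ j) → D) → ℝ≥0∞) :
    ⨅ W : ∀ j : A, Fin (κ j) → D, ∑ j, h j (W j) = ∑ j, ⨅ y, h j y := by
  apply le_antisymm
  · have : ∀ j : A, ∃ y, ∀ y', h j y ≤ h j y' := fun j => Finite.exists_min _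
    choose W hW using this
    have hm : ∀ j, h j (W j) = ⨅ y, h j y :=
      fun j => le_antisymm (le_iInf (hW j)) (iInf_le _ _)
    calc ⨅ W' : ∀ j : A, Fin (κ j) → D, ∑ j, h j (W' j) ≤ ∑ j, h j (W j) := iInf_le _ W
      _ = ∑ j, ⨅ y, h j y := Finset.sum_congr rfl fun j _ => hm j
  · exact le_iInf fun W => Finset.sum_le_sum fun j _ => iInf_le _ (W j)

/-- flexible version of clone membership -/
lemma inVClone_flex {Φ : Set (CFun D)} {n : ℕ} {f : (Fin n → D) → ℝ≥0∞}
    (V A : Type) [Fintype V] [Fintype A]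
    (ar : A → ℕ) (g : ∀ j : A, (Fin (ar j) → D) → ℝ≥0∞)
    (sc : ∀ j : A, Fin (ar j) → Fin n ⊕ V)
    (hmem : ∀ j, (⟨ar j, g j⟩ : CFun D) ∈ Φ ∨ (⟨ar j, g j⟩ : CFun D) = ⟨2, eqC D⟩)
    (hf : ∀ x, f x = ⨅ v : V → D, ∑ j, g j (fun t => Sum.elim x v (sc j t))) :
    InVClone Φ f := by
  classical
  set eV := Fintype.equivFin V with heV
  set eA := Fintype.equivFin A with heA
  refine ⟨Fintype.card V, Fintype.card A, fun j => ar (eA.symm j), fun j => g (eA.symm j),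
    fun j t => finSumFinEquiv (Sum.map id eV (sc (eA.symm j) t)), fun j => hmem _, ?_⟩
  intro x
  rw [hf]
  rw [← Equiv.iInf_comp (e := Equiv.arrowCongr eV.symm (Equiv.refl D))
    (g := fun v : V → D => ∑ j : A, g j (fun t => Sum.elim x v (sc j t)))]
  refine iInf_congr fun y => ?_
  have hyv : (Equiv.arrowCongr eV.symm (Equiv.refl D)) y = y ∘ eV := by
    funext t; simp [Equiv.arrowCongr]
  rw [hyv, ← Equiv.sum_comp eA.symm (fun j : A => g j (fun t => Sum.elim x (y ∘ eV) (sc j t)))]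
  refine Finset.sum_congr rfl fun j _ => ?_
  congr 1; funext t
  rw [append_eq_elim]
  cases sc (eA.symm j) t <;> rfl


/-- the valued clone is closed under psm-formulas over itself -/
lemma inVClone_superpose [Nonempty D] {Φ : Set (CFun D)} {n : ℕ} {f : (Fin n → D) → ℝ≥0∞}
    (V A : Type) [Fintype V] [Fintype A]
    (ar : A → ℕ) (g : ∀ j : A, (Fin (ar j) → D) → ℝ≥0∞)
    (sc : ∀ j : A, Fin (ar j) → Fin n ⊕ V)
    (hmem : ∀ j, InVClone Φ (g j))
    (hf : ∀ x, f x = ⨅ v : V → D, ∑ j, g j (fun t => Sum.elim x v (sc j t))) :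
    InVClone Φ f := by
  classical
  choose kk mm arr gg scc hΦ hval using hmem
  -- new bound variables and atoms
  set V' : Type := V ⊕ (Σ j : A, Fin (kk j)) with hV'
  set A' : Type := Σ j : A, Fin (mm j) with hA'
  refine inVClone_flex V' A' (fun p => arr p.1 p.2) (fun p => gg p.1 p.2)
    (fun p s => Sum.elim (fun r => Sum.map id Sum.inl (sc p.1 r))
      (fun r => Sum.inr (Sum.inr ⟨p.1, r⟩)) (finSumFinEquiv.symm (scc p.1 p.2 s)))
    (fun p => hΦ p.1 p.2) ?_
  intro x
  rw [hf]
  have e1 : ∀ v : V → D,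
      (∑ j : A, g j (fun t => Sum.elim x v (sc j t)))
      = ∑ j : A, ⨅ w : Fin (kk j) → D, ∑ t : Fin (mm j),
          gg j t (fun s => Fin.append (fun t' => Sum.elim x v (sc j t')) w (scc j t s)) :=
    fun v => Finset.sum_congr rfl fun j _ => hval j _
  calc (⨅ v : V → D, ∑ j : A, g j fun t => Sum.elim x v (sc j t))
      = ⨅ v : V → D, ⨅ W : ∀ j : A, Fin (kk j) → D, ∑ j : A, ∑ t : Fin (mm j),
          gg j t (fun s => Fin.append (fun t' => Sum.elim x v (sc j t')) (W j) (scc j t s)) := by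
        refine iInf_congr fun v => ?_
        rw [e1 v, ← iInf_sum_pi]
    _ = ⨅ v' : V' → D, ∑ p : A', gg p.1 p.2 (fun s => Sum.elim x v'
          (Sum.elim (fun r => Sum.map id Sum.inl (sc p.1 r))
            (fun r => Sum.inr (Sum.inr ⟨p.1, r⟩)) (finSumFinEquiv.symm (scc p.1 p.2 s)))) := by
        rw [iInf_sum_arrow]
        refine iInf_congr fun v => ?_
        rw [iInf_sigma_arrow]
        refine iInf_congr fun W => ?_
        conv_rhs => rw [← Finset.univ_sigma_univ, Finset.sum_sigma]
        refine Finset.sum_congr rfl fun j _ => Finset.sum_congr rfl fun t _ => ?_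
        congr 1; funext s
        obtain ⟨u, hu⟩ := finSumFinEquiv.surjective (scc j t s)
        rw [← hu, Equiv.symm_apply_apply, append_eq_elim]
        cases u with
        | inl r => simp only [Sum.elim_inl]; cases sc j r <;> rfl
        | inr r => rfl

end Part1


section Part3
variable {D : Type} [Fintype D] [DecidableEq D]
open Fin.NatCast

lemma pairEq {u w c d : D} (h : ![u, w] = ![c, d]) : u = c ∧ w = d :=
  ⟨congrFun h 0, congrFun h 1⟩

lemma inVClone_of_mem {Φ : Set (CFun D)} {nn : ℕ} {h : (Fin nn → D) → ℝ≥0∞}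
    (hm : (⟨nn, h⟩ : CFun D) ∈ Φ) : InVClone Φ h := by
  refine ⟨0, 1, fun _ => nn, fun _ => h, fun _ t => Fin.castAdd 0 t,
    fun _ => Or.inl hm, fun x => ?_⟩
  have : ∀ y : Fin 0 → D, (∑ _j : Fin 1, h fun i => Fin.append x y (Fin.castAdd 0 i)) = h x := by
    intro y
    rw [Fin.sum_univ_one]
    congr 1; funext i; exact Fin.append_left _ _ i
  rw [iInf_congr this, iInf_const]

/-- cyclic letters -/
def Ac (k : ℕ) (a : Fin (2*k+1) → D) (p : ℕ) : D := a ((p : ℕ) : Fin (2*k+1))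

lemma natCast_succ_fin {k : ℕ} (i : Fin (2*k+1)) :
    ((i.val + 1 : ℕ) : Fin (2*k+1)) = i + 1 := by
  rw [Nat.cast_add, Nat.cast_one, Fin.cast_val_eq_self]

lemma Ac_val {k : ℕ} (a : Fin (2*k+1) → D) (i : Fin (2*k+1)) : Ac k a i.val = a i := by
  rw [Ac, Fin.cast_val_eq_self]

lemma Ac_val_succ {k : ℕ} (a : Fin (2*k+1) → D) (i : Fin (2*k+1)) :
    Ac k a (i.val + 1) = a (i + 1) := by
  rw [Ac, natCast_succ_fin]

/-- the variable (free or bound) for path position `p` -/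
def vertexVar (k : ℕ) (p : ℕ) : Fin 2 ⊕ Fin (2*k) :=
  if _h : p = 0 then Sum.inl 0
  else if h2 : p ≤ 2*k then Sum.inr ⟨p-1, by omega⟩ else Sum.inl 1

/-- value of path position `p` -/
def vert (k : ℕ) (x : Fin 2 → D) (v : Fin (2*k) → D) (p : ℕ) : D :=
  Sum.elim x v (vertexVar k p)

lemma vert_zero (k : ℕ) (x : Fin 2 → D) (v : Fin (2*k) → D) : vert k x v 0 = x 0 := rfl

lemma vert_mid (k : ℕ) (x : Fin 2 → D) (v : Fin (2*k) → D) (p : Fin (2*k)) :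
    vert k x v (p.val + 1) = v p := by
  unfold vert vertexVar
  rw [dif_neg (by omega), dif_pos (by omega)]
  simp

lemma vert_last (k : ℕ) (x : Fin 2 → D) (v : Fin (2*k) → D) :
    vert k x v (2*k+1) = x 1 := by
  unfold vert vertexVar
  rw [dif_neg (by omega), dif_neg (by omega)]
  rfl

/-- the unary cost atom at internal position `p+1` -/
noncomputable def uCostF (k : ℕ) (b : Fin (2*k+1) → D) (W : ℝ≥0∞) (p : Fin (2*k)) :
    (Fin 1 → D) → ℝ≥0∞ :=
  fun z => if z 0 = Ac k b (p.val + 1) then 0 else W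

/-- the odd-cycle path cost function -/
noncomputable def FFfun (k : ℕ) (g : Fin (2*k+1) → (Fin 2 → D) → ℝ≥0∞)
    (b : Fin (2*k+1) → D) (W : ℝ≥0∞) : (Fin 2 → D) → ℝ≥0∞ :=
  fun x => ⨅ v : Fin (2*k) → D,
    (∑ i : Fin (2*k+1), g i ![vert k x v i.val, vert k x v (i.val + 1)]) +
    ∑ p : Fin (2*k), uCostF k b W p (fun _ => v p)

lemma card_parity (k r : ℕ) (hr : r < 2) :
    (Finset.univ.filter (fun p : Fin (2*k) => p.val % 2 = r)).card = k := by
  have : (Finset.univ.filter (fun p : Fin (2*k) => p.val % 2 = r)).card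
      = (Finset.univ : Finset (Fin k)).card := by
    refine Finset.card_bij' (fun p _ => (⟨p.val / 2, by omega⟩ : Fin k))
      (fun q _ => (⟨2 * q.val + r, by omega⟩ : Fin (2*k))) (fun p hp => Finset.mem_univ _)
      (fun q hq => ?_) (fun p hp => ?_) (fun q hq => ?_)
    · simp only [Finset.mem_filter, Finset.mem_univ, true_and]; omega
    · simp only [Finset.mem_filter, Finset.mem_univ, true_and] at hp
      exact Fin.ext (by simp only []; show 2 * (p.val / 2) + r = p.val; omega)
    · exact Fin.ext (by simp; omega)
  rw [this, Finset.card_univ, Fintype.card_fin]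

lemma sum_ite_parity (k r : ℕ) (hr : r < 2) (W : ℝ≥0∞) (c : Fin (2*k) → D) (d : Fin (2*k) → D)
    (hcd : ∀ p, (c p = d p ↔ (p.val + 1) % 2 = r)) :
    ∑ p : Fin (2*k), (if c p = d p then (0:ℝ≥0∞) else W) = (k : ℝ≥0∞) * W := by
  classical
  rw [Finset.sum_ite, Finset.sum_const_zero, zero_add, Finset.sum_const, nsmul_eq_mul]
  congr 1
  have : (Finset.univ.filter fun p : Fin (2*k) => ¬ c p = d p)
      = Finset.univ.filter fun p : Fin (2*k) => p.val % 2 = r := by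
    refine Finset.filter_congr fun p _ => ?_
    rw [hcd p]
    constructor <;> omega
  rw [this, card_parity k r hr]

end Part3


section Part4
variable {D : Type} [Fintype D] [DecidableEq D]

lemma FF_mem [Nonempty D] {Φ : Set (CFun D)} (k : ℕ)
    (g : Fin (2*k+1) → (Fin 2 → D) → ℝ≥0∞) (hg : ∀ i, InVClone Φ (g i))
    (b : Fin (2*k+1) → D) (W : ℝ≥0∞)
    (hcons : ∀ u : D → ℝ≥0∞, (⟨1, fun x => u (x 0)⟩ : CFun D) ∈ Φ) :
    InVClone Φ (FFfun k g b W) := by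
  classical
  refine inVClone_superpose (Fin (2*k)) (Fin (2*k+1) ⊕ Fin (2*k))
    (ar := Sum.elim (fun _ => 2) (fun _ => 1))
    (g := fun j => match j with
      | Sum.inl i => g i
      | Sum.inr p => uCostF k b W p)
    (sc := fun j => match j with
      | Sum.inl i => fun t => vertexVar k (i.val + t.val)
      | Sum.inr p => fun _ => Sum.inr p)
    (hmem := fun j => ?_) (hf := fun x => ?_)
  · match j with
    | Sum.inl i => exact hg i
    | Sum.inr p => exact inVClone_of_mem (hcons (fun d => if d = Ac k b (p.val+1) then 0 else W))
  · unfold FFfun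
    refine iInf_congr fun v => ?_
    rw [Fintype.sum_sum_type]
    congr 1
    refine Finset.sum_congr rfl fun i _ => ?_
    congr 1; funext t
    fin_cases t
    · show vert k x v i.val = Sum.elim x v (vertexVar k (i.val + (0 : Fin 2).val))
      norm_num [vert]
    · rfl

lemma FF_le_of_pat (k : ℕ) (g : Fin (2*k+1) → (Fin 2 → D) → ℝ≥0∞)
    (b : Fin (2*k+1) → D) (W : ℝ≥0∞) (pat : ℕ → D) (x : Fin 2 → D)
    (hx0 : x 0 = pat 0) (hx1 : x 1 = pat (2*k+1)) :
    FFfun k g b W x ≤ (∑ i : Fin (2*k+1), g i ![pat i.val, pat (i.val + 1)]) +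
      ∑ p : Fin (2*k), (if pat (p.val + 1) = Ac k b (p.val + 1) then (0:ℝ≥0∞) else W) := by
  refine (iInf_le _ (fun q => pat (q.val + 1))).trans (le_of_eq ?_)
  have hv : ∀ p : ℕ, p ≤ 2*k+1 → vert k x (fun q => pat (q.val+1)) p = pat p := by
    intro p hp
    unfold vert vertexVar
    split_ifs with h1 h2
    · rw [h1]; exact hx0
    · show pat (p - 1 + 1) = pat p; congr 1; omega
    · have : p = 2*k+1 := by omega
      rw [this]; exact hx1
  congr 1
  refine Finset.sum_congr rfl fun i _ => ?_
  rw [hv i.val (by omega), hv (i.val+1) (by omega)]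

end Part4


section Part5
variable {D : Type} [Fintype D] [DecidableEq D]
open Fin.NatCast

lemma Ac_zero {k : ℕ} (a : Fin (2*k+1) → D) : Ac k a 0 = a 0 := by simp [Ac]

lemma Ac_last {k : ℕ} (a : Fin (2*k+1) → D) : Ac k a (2*k+1) = a 0 := by
  rw [Ac, Fin.natCast_self]

lemma edge_sum_le (k : ℕ) (g : Fin (2*k+1) → (Fin 2 → D) → ℝ≥0∞) (a b : Fin (2*k+1) → D)
    (pat : ℕ → D)
    (hpat : ∀ i : Fin (2*k+1), ![pat i.val, pat (i.val+1)] = ![a i, a (i+1)] ∨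
      ![pat i.val, pat (i.val+1)] = ![b i, a (i+1)] ∨
      ![pat i.val, pat (i.val+1)] = ![a i, b (i+1)]) :
    (∑ i, g i ![pat i.val, pat (i.val+1)]) ≤
      ∑ i, (g i ![a i, a (i+1)] + g i ![b i, a (i+1)] + g i ![a i, b (i+1)]) := by
  refine Finset.sum_le_sum fun i _ => ?_
  rcases hpat i with h | h | h <;> rw [h]
  · exact le_self_add.trans le_self_add
  · exact le_add_self.trans le_self_add
  · exact le_add_self

def patAA (k : ℕ) (a : Fin (2*k+1) → D) : ℕ → D := Ac k a

def patBB (k : ℕ) (a b : Fin (2*k+1) → D) : ℕ → D :=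
  fun p => if p = 0 ∨ p = 2*k+1 then Ac k b p else Ac k a p

def patAB (k : ℕ) (a b : Fin (2*k+1) → D) : ℕ → D :=
  fun p => if p % 2 = 1 then Ac k b p else Ac k a p

def patBA (k : ℕ) (a b : Fin (2*k+1) → D) : ℕ → D :=
  fun p => if p % 2 = 0 then Ac k b p else Ac k a p

lemma patAA_edges (k : ℕ) (a b : Fin (2*k+1) → D) (i : Fin (2*k+1)) :
    ![patAA k a i.val, patAA k a (i.val+1)] = ![a i, a (i+1)] ∨
    ![patAA k a i.val, patAA k a (i.val+1)] = ![b i, a (i+1)] ∨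
    ![patAA k a i.val, patAA k a (i.val+1)] = ![a i, b (i+1)] := by
  left; rw [patAA, Ac_val, Ac_val_succ]

lemma patBB_edges (k : ℕ) (hk : 1 ≤ k) (a b : Fin (2*k+1) → D) (i : Fin (2*k+1)) :
    ![patBB k a b i.val, patBB k a b (i.val+1)] = ![a i, a (i+1)] ∨
    ![patBB k a b i.val, patBB k a b (i.val+1)] = ![b i, a (i+1)] ∨
    ![patBB k a b i.val, patBB k a b (i.val+1)] = ![a i, b (i+1)] := by
  unfold patBB
  have hi := i.isLt
  rcases Nat.lt_or_ge i.val 1 with h0 | h1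
  · right; left
    rw [if_pos (by omega), if_neg (by omega), Ac_val, Ac_val_succ]
  · rcases Nat.lt_or_ge i.val (2*k) with hmid | hlast
    · left
      rw [if_neg (by omega), if_neg (by omega), Ac_val, Ac_val_succ]
    · right; right
      rw [if_neg (by omega), if_pos (by omega), Ac_val, Ac_val_succ]

lemma patAB_edges (k : ℕ) (a b : Fin (2*k+1) → D) (i : Fin (2*k+1)) :
    ![patAB k a b i.val, patAB k a b (i.val+1)] = ![a i, a (i+1)] ∨
    ![patAB k a b i.val, patAB k a b (i.val+1)] = ![b i, a (i+1)] ∨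
    ![patAB k a b i.val, patAB k a b (i.val+1)] = ![a i, b (i+1)] := by
  unfold patAB
  rcases Nat.even_or_odd i.val with he | ho
  · have h2 := Nat.even_iff.mp he
    right; right
    rw [if_neg (by omega), if_pos (by omega), Ac_val, Ac_val_succ]
  · have h2 := Nat.odd_iff.mp ho
    right; left
    rw [if_pos (by omega), if_neg (by omega), Ac_val, Ac_val_succ]

lemma patBA_edges (k : ℕ) (a b : Fin (2*k+1) → D) (i : Fin (2*k+1)) :
    ![patBA k a b i.val, patBA k a b (i.val+1)] = ![a i, a (i+1)] ∨
    ![patBA k a b i.val, patBA k a b (i.val+1)] = ![b i, a (i+1)] ∨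
    ![patBA k a b i.val, patBA k a b (i.val+1)] = ![a i, b (i+1)] := by
  unfold patBA
  rcases Nat.even_or_odd i.val with he | ho
  · have h2 := Nat.even_iff.mp he
    right; left
    rw [if_pos (by omega), if_neg (by omega), Ac_val, Ac_val_succ]
  · have h2 := Nat.odd_iff.mp ho
    right; right
    rw [if_neg (by omega), if_pos (by omega), Ac_val, Ac_val_succ]

lemma patAB_unary (k : ℕ) (a b : Fin (2*k+1) → D) (hab : ∀ i, a i ≠ b i) (p : Fin (2*k)) :
    patAB k a b (p.val+1) = Ac k b (p.val+1) ↔ (p.val+1) % 2 = 1 := by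
  unfold patAB
  by_cases h : (p.val+1) % 2 = 1
  · simp [h]
  · simp only [if_neg h, h, iff_false]
    exact hab _

lemma patBA_unary (k : ℕ) (a b : Fin (2*k+1) → D) (hab : ∀ i, a i ≠ b i) (p : Fin (2*k)) :
    patBA k a b (p.val+1) = Ac k b (p.val+1) ↔ (p.val+1) % 2 = 0 := by
  unfold patBA
  by_cases h : (p.val+1) % 2 = 0
  · simp [h]
  · simp only [if_neg h, h, iff_false]
    exact hab _

end Part5


/-- If `Φ` contains every unary cost function and, for some
`k ≥ 1`, its valued clone contains binary cost functions `g₀, …, g_{2k}` whose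
points of finite value are, cyclically, the relations
`N(aᵢ, bᵢ, a_{i+1}, b_{i+1}) = {(aᵢ, a_{i+1}), (bᵢ, a_{i+1}), (aᵢ, b_{i+1})}`
with `aᵢ ≠ bᵢ`, then `Φ` is not weakly submodular. -/
theorem not_weaklySubmodular_of_oddCycle
    {D : Type} [Fintype D] [DecidableEq D] (hD : 2 ≤ Fintype.card D)
    (Φ : Set (CFun D))
    (hcons : ∀ u : D → ℝ≥0∞, (⟨1, fun x => u (x 0)⟩ : CFun D) ∈ Φ)
    (k : ℕ) (hk : 1 ≤ k)
    (a b : Fin (2 * k + 1) → D) (hab : ∀ i, a i ≠ b i)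
    (g : Fin (2 * k + 1) → (Fin 2 → D) → ℝ≥0∞)
    (hg : ∀ i, InVClone Φ (g i))
    (hfin : ∀ i : Fin (2 * k + 1), {x : Fin 2 → D | g i x ≠ ⊤} =
      {![a i, a (i + 1)], ![b i, a (i + 1)], ![a i, b (i + 1)]}) :
    ¬ WeaklySubmodular Φ := by
  classical
  intro hWS
  have hne : Nonempty D := Fintype.card_pos_iff.mp (by omega)
  have hfin' : ∀ (i : Fin (2*k+1)) (xx : Fin 2 → D), g i xx ≠ ⊤ ↔
      (xx = ![a i, a (i+1)] ∨ xx = ![b i, a (i+1)] ∨ xx = ![a i, b (i+1)]) := by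
    intro i xx
    have := Set.ext_iff.mp (hfin i) xx
    simpa [Set.mem_insert_iff] using this
  have h1 : ∀ i : Fin (2*k+1), g i ![a i, a (i+1)] ≠ ⊤ :=
    fun i => (hfin' i _).mpr (Or.inl rfl)
  have h2 : ∀ i : Fin (2*k+1), g i ![b i, a (i+1)] ≠ ⊤ :=
    fun i => (hfin' i _).mpr (Or.inr (Or.inl rfl))
  have h3 : ∀ i : Fin (2*k+1), g i ![a i, b (i+1)] ≠ ⊤ :=
    fun i => (hfin' i _).mpr (Or.inr (Or.inr rfl))
  set S : ℝ≥0∞ := ∑ i : Fin (2*k+1),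
    (g i ![a i, a (i+1)] + g i ![b i, a (i+1)] + g i ![a i, b (i+1)]) with hSdef
  have hS : S ≠ ⊤ := by
    rw [hSdef, Ne, ENNReal.sum_eq_top]
    push_neg
    intro i _
    simp [ENNReal.add_eq_top, h1 i, h2 i, h3 i]
  set W : ℝ≥0∞ := 2*S + 1 with hWdef
  have hW : W ≠ ⊤ := by
    rw [hWdef]
    simp [ENNReal.add_eq_top, ENNReal.mul_eq_top, hS]
  set F := FFfun k g b W with hF
  have hFmem : InVClone Φ F := FF_mem k g hg b W hcons
  -- upper bounds
  have hedgeS : ∀ pat : ℕ → D,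
      (∀ i : Fin (2*k+1), ![pat i.val, pat (i.val+1)] = ![a i, a (i+1)] ∨
        ![pat i.val, pat (i.val+1)] = ![b i, a (i+1)] ∨
        ![pat i.val, pat (i.val+1)] = ![a i, b (i+1)]) →
      (∑ i, g i ![pat i.val, pat (i.val+1)]) ≤ S := by
    intro pat hpat
    rw [hSdef]
    exact edge_sum_le k g a b pat hpat
  have hunW : ∀ pat : ℕ → D,
      (∑ p : Fin (2*k), (if pat (p.val+1) = Ac k b (p.val+1) then (0:ℝ≥0∞) else W)) ≤
        ((2*k : ℕ) : ℝ≥0∞) * W := by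
    intro pat
    calc ∑ p : Fin (2*k), (if pat (p.val+1) = Ac k b (p.val+1) then (0:ℝ≥0∞) else W)
        ≤ ∑ _p : Fin (2*k), W := Finset.sum_le_sum fun p _ => by split <;> simp
      _ = ((2*k : ℕ) : ℝ≥0∞) * W := by
          rw [Finset.sum_const, nsmul_eq_mul, Finset.card_univ, Fintype.card_fin]
  have hub_aa : F ![a 0, a 0] ≤ S + ((2*k : ℕ) : ℝ≥0∞) * W := by
    refine (FF_le_of_pat k g b W (patAA k a) ![a 0, a 0] ?_ ?_).trans
      (add_le_add (hedgeS _ (patAA_edges k a b)) (hunW _))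
    · rw [patAA, Ac_zero]; rfl
    · rw [patAA, Ac_last]; rfl
  have hub_bb : F ![b 0, b 0] ≤ S + ((2*k : ℕ) : ℝ≥0∞) * W := by
    refine (FF_le_of_pat k g b W (patBB k a b) ![b 0, b 0] ?_ ?_).trans
      (add_le_add (hedgeS _ (patBB_edges k hk a b)) (hunW _))
    · rw [patBB]; rw [if_pos (Or.inl rfl), Ac_zero]; rfl
    · rw [patBB]; rw [if_pos (Or.inr rfl), Ac_last]; rfl
  have hub_ab : F ![a 0, b 0] ≤ S + (k : ℝ≥0∞) * W := by
    refine (FF_le_of_pat k g b W (patAB k a b) ![a 0, b 0] ?_ ?_).trans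
      (add_le_add (hedgeS _ (patAB_edges k a b)) (le_of_eq
        (sum_ite_parity k 1 (by omega) W _ _ (patAB_unary k a b hab))))
    · rw [patAB]; rw [if_neg (by omega), Ac_zero]; rfl
    · rw [patAB]; rw [if_pos (by omega), Ac_last]; rfl
  have hub_ba : F ![b 0, a 0] ≤ S + (k : ℝ≥0∞) * W := by
    refine (FF_le_of_pat k g b W (patBA k a b) ![b 0, a 0] ?_ ?_).trans
      (add_le_add (hedgeS _ (patBA_edges k a b)) (le_of_eq
        (sum_ite_parity k 0 (by omega) W _ _ (patBA_unary k a b hab))))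
    · rw [patBA]; rw [if_pos (by omega), Ac_zero]; rfl
    · rw [patBA]; rw [if_neg (by omega), Ac_last]; rfl
  -- lower bounds
  have hvertmem : ∀ (x : Fin 2 → D) (v : Fin (2*k) → D) (i : Fin (2*k+1)),
      g i ![vert k x v i.val, vert k x v (i.val+1)] ≠ ⊤ →
      ¬(vert k x v i.val = Ac k b i.val ∧ vert k x v (i.val+1) = Ac k b (i.val+1)) := by
    rintro x v i hnet ⟨hb1, hb2⟩
    rw [Ac_val] at hb1
    rw [Ac_val_succ] at hb2
    rcases (hfin' i _).mp hnet with h | h | h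
    · exact hab i ((pairEq h).1.symm.trans hb1)
    · exact hab (i+1) ((pairEq h).2.symm.trans hb2)
    · exact hab i ((pairEq h).1.symm.trans hb1)
  have hnoadj : ∀ (x : Fin 2 → D) (v : Fin (2*k) → D),
      (∀ i : Fin (2*k+1), g i ![vert k x v i.val, vert k x v (i.val+1)] ≠ ⊤) →
      ∀ p q : Fin (2*k), v p = Ac k b (p.val+1) → v q = Ac k b (q.val+1) →
        q.val = p.val + 1 → False := by
    intro x v hfins p q hp hq hpq
    refine hvertmem x v ⟨p.val+1, by omega⟩ (hfins _) ⟨?_, ?_⟩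
    · show vert k x v (p.val+1) = Ac k b (p.val+1)
      rw [vert_mid]; exact hp
    · show vert k x v (p.val+1+1) = Ac k b (p.val+1+1)
      have he : p.val+1+1 = q.val+1 := by omega
      rw [he, vert_mid]; exact hq
  have hcard_le : ∀ (x : Fin 2 → D) (v : Fin (2*k) → D),
      (∀ i : Fin (2*k+1), g i ![vert k x v i.val, vert k x v (i.val+1)] ≠ ⊤) →
      (Finset.univ.filter (fun p : Fin (2*k) => v p = Ac k b (p.val+1))).card ≤ k := by
    intro x v hfins
    refine (Finset.card_le_card_of_injOn (fun p => p.val / 2)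
      (fun p _ => Finset.mem_range.mpr (show p.val / 2 < k by have := p.isLt; omega)) ?_).trans_eq
      (Finset.card_range k)
    intro p hp q hq he
    simp only [Finset.coe_filter, Set.mem_setOf_eq, Finset.mem_univ, true_and] at hp hq
    have he' : p.val / 2 = q.val / 2 := he
    by_contra hne
    have hv : p.val ≠ q.val := fun h => hne (Fin.ext h)
    have hpl := p.isLt
    have hql := q.isLt
    rcases (by omega : q.val = p.val + 1 ∨ p.val = q.val + 1) with h | h
    · exact hnoadj x v hfins p q hp hq h
    · exact hnoadj x v hfins q p hq hp h
  have hcard_bb : ∀ v : Fin (2*k) → D,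
      (∀ i : Fin (2*k+1), g i ![vert k (![b 0, b 0]) v i.val, vert k (![b 0, b 0]) v (i.val+1)] ≠ ⊤) →
      (Finset.univ.filter (fun p : Fin (2*k) => v p = Ac k b (p.val+1))).card ≤ k - 1 := by
    intro v hfins
    have hz0 : ∀ p : Fin (2*k), p.val = 0 → v p ≠ Ac k b (p.val+1) := by
      intro p hp0 hvp
      refine hvertmem ![b 0, b 0] v ⟨p.val, by omega⟩ (hfins _) ⟨?_, ?_⟩
      · show vert k (![b 0, b 0]) v p.val = Ac k b p.val
        rw [hp0, vert_zero, Ac_zero]; rfl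
      · show vert k (![b 0, b 0]) v (p.val+1) = Ac k b (p.val+1)
        rw [vert_mid]; exact hvp
    have hzlast : ∀ p : Fin (2*k), p.val = 2*k - 1 → v p ≠ Ac k b (p.val+1) := by
      intro p hpl hvp
      refine hvertmem ![b 0, b 0] v ⟨p.val+1, by omega⟩ (hfins _) ⟨?_, ?_⟩
      · show vert k (![b 0, b 0]) v (p.val+1) = Ac k b (p.val+1)
        rw [vert_mid]; exact hvp
      · show vert k (![b 0, b 0]) v (p.val+1+1) = Ac k b (p.val+1+1)
        have he : p.val+1+1 = 2*k+1 := by omega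
        rw [he, vert_last, Ac_last]; rfl
    refine (Finset.card_le_card_of_injOn (fun p => (p.val - 1) / 2)
      (fun p hp => Finset.mem_range.mpr (show (p.val - 1) / 2 < k - 1 from ?_)) ?_).trans_eq
      (Finset.card_range (k-1))
    · simp only [Finset.coe_filter, Set.mem_setOf_eq, Finset.mem_univ, true_and] at hp
      have e0 : p.val ≠ 0 := fun h => hz0 p h hp
      have e1 : p.val ≠ 2*k - 1 := fun h => hzlast p h hp
      have := p.isLt
      omega
    · intro p hp q hq he
      simp only [Finset.coe_filter, Set.mem_setOf_eq, Finset.mem_univ, true_and] at hp hq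
      have e0p : p.val ≠ 0 := fun h => hz0 p h hp
      have e0q : q.val ≠ 0 := fun h => hz0 q h hq
      have he' : (p.val - 1) / 2 = (q.val - 1) / 2 := he
      by_contra hne
      have hv : p.val ≠ q.val := fun h => hne (Fin.ext h)
      have hpl := p.isLt
      have hql := q.isLt
      rcases (by omega : q.val = p.val + 1 ∨ p.val = q.val + 1) with h | h
      · exact hnoadj ![b 0, b 0] v hfins p q hp hq h
      · exact hnoadj ![b 0, b 0] v hfins q p hq hp h
  have hFF_lower : ∀ (x : Fin 2 → D) (c : ℕ), c ≤ 2*k →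
      (∀ v : Fin (2*k) → D,
        (∀ i : Fin (2*k+1), g i ![vert k x v i.val, vert k x v (i.val+1)] ≠ ⊤) →
        (Finset.univ.filter (fun p : Fin (2*k) => v p = Ac k b (p.val+1))).card ≤ c) →
      ((2*k - c : ℕ) : ℝ≥0∞) * W ≤ F x := by
    intro x c hc2 hc
    refine le_iInf fun v => ?_
    by_cases hfins : ∀ i : Fin (2*k+1), g i ![vert k x v i.val, vert k x v (i.val+1)] ≠ ⊤
    · have hcard := hc v hfins
      have hun : (∑ p : Fin (2*k), (if v p = Ac k b (p.val+1) then (0:ℝ≥0∞) else W))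
          = ((2*k - (Finset.univ.filter
              (fun p : Fin (2*k) => v p = Ac k b (p.val+1))).card : ℕ) : ℝ≥0∞) * W := by
        rw [Finset.sum_ite, Finset.sum_const_zero, zero_add, Finset.sum_const, nsmul_eq_mul]
        congr 2
        have := Finset.card_filter_add_card_filter_not
          (s := (Finset.univ : Finset (Fin (2*k))))
          (fun p : Fin (2*k) => v p = Ac k b (p.val+1))
        rw [Finset.card_univ, Fintype.card_fin] at this
        omega
      calc ((2*k - c : ℕ) : ℝ≥0∞) * W
          ≤ ((2*k - (Finset.univ.filter
              (fun p : Fin (2*k) => v p = Ac k b (p.val+1))).card : ℕ) : ℝ≥0∞) * W :=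
            mul_le_mul_left (Nat.cast_le.mpr (by omega)) W
        _ = ∑ p : Fin (2*k), uCostF k b W p (fun _ => v p) := hun.symm
        _ ≤ (∑ i : Fin (2*k+1), g i ![vert k x v i.val, vert k x v (i.val+1)]) +
              ∑ p : Fin (2*k), uCostF k b W p (fun _ => v p) := le_add_self
    · push_neg at hfins
      obtain ⟨i, hi⟩ := hfins
      have : (∑ i : Fin (2*k+1), g i ![vert k x v i.val, vert k x v (i.val+1)]) = ⊤ :=
        ENNReal.sum_eq_top.mpr ⟨i, Finset.mem_univ i, hi⟩
      rw [this]
      simp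
  have hlb_aa : ((k : ℕ) : ℝ≥0∞) * W ≤ F ![a 0, a 0] := by
    have := hFF_lower ![a 0, a 0] k (by omega) (fun v hv => hcard_le _ v hv)
    rwa [show 2*k - k = k from by omega] at this
  have hlb_bb : ((k + 1 : ℕ) : ℝ≥0∞) * W ≤ F ![b 0, b 0] := by
    have := hFF_lower ![b 0, b 0] (k-1) (by omega) (fun v hv => hcard_bb v hv)
    rwa [show 2*k - (k-1) = k+1 from by omega] at this
  -- combine
  rcases hWS F hFmem (a 0) (b 0) with hle | ⟨htop, _⟩
  · have hcalc : ((k : ℕ) : ℝ≥0∞) * W + ((k + 1 : ℕ) : ℝ≥0∞) * W ≤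
        (S + (k : ℝ≥0∞) * W) + (S + (k : ℝ≥0∞) * W) :=
      (add_le_add hlb_aa hlb_bb).trans (hle.trans (add_le_add hub_ab hub_ba))
    have hL : ((k : ℕ) : ℝ≥0∞) * W + ((k + 1 : ℕ) : ℝ≥0∞) * W
        = ((2*(k : ℝ≥0∞))*W + 2*S) + 1 := by
      rw [hWdef]
      push_cast
      ring
    have hR : (S + (k : ℝ≥0∞) * W) + (S + (k : ℝ≥0∞) * W) = (2*(k : ℝ≥0∞))*W + 2*S := by
      ring
    rw [hL, hR] at hcalc
    have hX : (2*(k : ℝ≥0∞))*W + 2*S ≠ ⊤ := by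
      refine ENNReal.add_ne_top.mpr ⟨ENNReal.mul_ne_top ?_ hW, ENNReal.mul_ne_top ?_ hS⟩
      · exact ENNReal.mul_ne_top (by simp) (by simp)
      · simp
    exact absurd hcalc (not_le.mpr (ENNReal.lt_add_right hX one_ne_zero))
  · refine absurd htop ?_
    refine ne_top_of_le_ne_top ?_ hub_aa
    exact ENNReal.add_ne_top.mpr ⟨hS, ENNReal.mul_ne_top (ENNReal.natCast_ne_top _) hW⟩
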